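/- Let m ≥ 2 be an integer, T > 0, let K : [0,T] → ℝ be continuous, and let φ : (0,T] → ℝ be C¹ and satisfy φ'(t) + φ(t)²/(m−1) + K(t) ≤ 0 for all t ∈ (0,T], with t·φ(t) bounded as t → 0⁺. Let h : [0,T] → ℝ be Lipschitz with h(t) ≥ 0 for all t and h(0) = 0, and denote by h' its almost-everywhere derivative. Then h(T)²·φ(T) ≤ (m−1)·∫₀ᵀ h'(t)² dt − ∫₀ᵀ h(t)²·K(t) dt. In particular, if in addition h(T) = 0, then 0 ≤ (m−1)·∫₀ᵀ h'(t)² dt − ∫₀ᵀ h(t)²·K(t) dt. -/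

import Mathlib

open Set MeasureTheory Filter


/- STATEMENT 5: part (A) of Lemma 8.2 in one-variable form: if φ is C¹ on
(0,T] with φ' + φ²/(m-1) + K ≤ 0 and t·φ(t) bounded as t → 0⁺, and h is
Lipschitz, nonnegative, with h(0)=0 and a.e. derivative h', then
h(T)²·φ(T) ≤ (m-1)∫₀ᵀ h'² - ∫₀ᵀ h²·K; in particular if h(T)=0 then
0 ≤ (m-1)∫₀ᵀ h'² - ∫₀ᵀ h²·K. -/
lemma aux_abs_deriv_le {C : NNReal} {f : ℝ → ℝ} {s : Set ℝ} (hf : LipschitzOnWith C f s)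
    {t d : ℝ} (hs : s ∈ nhds t) (hd : HasDerivAt f d t) : |d| ≤ C := by
  have H := (hasDerivAt_iff_tendsto_slope.1 hd).abs
  refine le_of_tendsto H ?_
  filter_upwards [nhdsWithin_le_nhds hs, self_mem_nhdsWithin] with y hy hy'
  have ht : t ∈ s := mem_of_mem_nhds hs
  have hdist := hf.dist_le_mul y hy t ht
  rw [Real.dist_eq, Real.dist_eq] at hdist
  have hyt : y - t ≠ 0 := sub_ne_zero.2 hy'
  rw [slope_def_field, div_eq_mul_inv, abs_mul, abs_inv]
  rw [← div_eq_mul_inv, div_le_iff₀ (by positivity)]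
  exact hdist

/-- FTC-type inequality for monotone continuous functions -/
lemma aux_mono_ftc {f F : ℝ → ℝ} (hmono : Monotone f) (hcont : Continuous f)
    {a b : ℝ} (hab : a ≤ b)
    (hderiv : ∀ᵐ t ∂(volume.restrict (Ioo a b)), HasDerivAt f (F t) t) :
    ∫ t in Ioo a b, F t ≤ f b - f a := by
  set S : StieltjesFunction ℝ := ⟨f, hmono, fun x => (hcont.continuousAt).continuousWithinAt⟩
  haveI : SigmaFinite S.measure := sigmaFinite_of_locallyFinite
  have hS : ∀ᵐ t ∂(volume.restrict (Ioo a b)),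
      HasDerivAt f ((Measure.rnDeriv S.measure volume t).toReal) t :=
    ae_restrict_of_ae S.ae_hasDerivAt
  have hae : ∀ᵐ t ∂(volume.restrict (Ioo a b)),
      F t = (Measure.rnDeriv S.measure volume t).toReal := by
    filter_upwards [hderiv, hS] with t h1 h2 using h1.unique h2
  rw [integral_congr_ae hae]
  have hIoc : S.measure (Ioc a b) = ENNReal.ofReal (f b - f a) := S.measure_Ioc a b
  have hne : S.measure (Ioc a b) ≠ ⊤ := by rw [hIoc]; exact ENNReal.ofReal_ne_top
  have hne' : S.measure (Ioo a b) ≠ ⊤ :=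
    ne_top_of_le_ne_top hne (measure_mono Ioo_subset_Ioc_self)
  calc ∫ t in Ioo a b, (Measure.rnDeriv S.measure volume t).toReal
      ≤ (S.measure (Ioo a b)).toReal := Measure.setIntegral_toReal_rnDeriv_le hne'
    _ ≤ (S.measure (Ioc a b)).toReal :=
        ENNReal.toReal_mono hne (measure_mono Ioo_subset_Ioc_self)
    _ = f b - f a := by
        rw [hIoc, ENNReal.toReal_ofReal (sub_nonneg.2 (hmono hab))]

lemma aux_lip_ftc {g g' φ : ℝ → ℝ} {M : NNReal} (hg : LipschitzWith M g)
    {a b : ℝ} (hab : a ≤ b)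
    (hderiv : ∀ᵐ t ∂(volume.restrict (Ioo a b)), HasDerivAt g (g' t) t)
    (hφi : IntegrableOn φ (Ioo a b))
    (hle : ∀ᵐ t ∂(volume.restrict (Ioo a b)), g' t ≤ φ t) :
    g b - g a ≤ ∫ t in Ioo a b, φ t := by
  set f : ℝ → ℝ := fun t => (M : ℝ) * t - g t with hf
  have hmono : Monotone f := by
    intro x y hxy
    have := hg.dist_le_mul x y
    rw [Real.dist_eq, Real.dist_eq] at this
    have h1 : g y - g x ≤ M * |x - y| := by
      calc g y - g x ≤ |g y - g x| := le_abs_self _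
        _ = |g x - g y| := abs_sub_comm _ _
        _ ≤ M * |x - y| := this
    simp only [hf]
    rw [abs_of_nonpos (by linarith)] at h1
    nlinarith
  have hcont : Continuous f := (continuous_const.mul continuous_id).sub hg.continuous
  have h2 : ∀ᵐ t ∂(volume.restrict (Ioo a b)),
      HasDerivAt f ((M : ℝ) - g' t) t := by
    filter_upwards [hderiv] with t ht
    have := ((hasDerivAt_id' t).const_mul (M : ℝ)).sub ht
    simp only [mul_one] at this
    exact this
  have hg'bd : ∀ᵐ t ∂(volume.restrict (Ioo a b)), |g' t| ≤ (M : ℝ) := by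
    filter_upwards [hderiv] with t ht
    exact aux_abs_deriv_le (hg.lipschitzOnWith (s := univ)) univ_mem ht
  have hg'meas : AEStronglyMeasurable g' (volume.restrict (Ioo a b)) := by
    have : g' =ᵐ[volume.restrict (Ioo a b)] deriv g := by
      filter_upwards [hderiv] with t ht using ht.deriv.symm
    exact (measurable_deriv g).aestronglyMeasurable.congr this.symm
  have hg'i : IntegrableOn g' (Ioo a b) := by
    refine Integrable.mono' (g := fun _ => (M:ℝ)) (integrableOn_const measure_Ioo_lt_top.ne) hg'meas ?_
    filter_upwards [hg'bd] with t ht using ht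
  have key := aux_mono_ftc hmono hcont hab h2
  rw [integral_sub (integrableOn_const (μ := volume) (s := Ioo a b) (C := (M:ℝ)) measure_Ioo_lt_top.ne) hg'i] at key
  have hconst : ∫ _ in Ioo a b, (M : ℝ) = (b - a) * M := by
    simp [Real.volume_Ioo, ENNReal.toReal_ofReal (sub_nonneg.2 hab), hab]
  have h3 : g b - g a ≤ ∫ t in Ioo a b, g' t := by
    simp only [hf] at key
    rw [hconst] at key
    linarith
  exact h3.trans (integral_mono_ae hg'i hφi hle)

/-- product of bounded Lipschitz functions is Lipschitz -/
lemma aux_lip_mul {s : Set ℝ} {f₁ f₂ : ℝ → ℝ} {K₁ K₂ : NNReal} {B₁ B₂ : ℝ}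
    (h₁ : LipschitzOnWith K₁ f₁ s) (h₂ : LipschitzOnWith K₂ f₂ s)
    (hb₁ : ∀ t ∈ s, |f₁ t| ≤ B₁) (hb₂ : ∀ t ∈ s, |f₂ t| ≤ B₂) :
    ∃ M : NNReal, LipschitzOnWith M (fun t => f₁ t * f₂ t) s := by
  refine ⟨(B₁ * K₂ + B₂ * K₁).toNNReal, ?_⟩
  rw [lipschitzOnWith_iff_dist_le_mul]
  intro x hx y hy
  have d1 := h₁.dist_le_mul x hx y hy
  have d2 := h₂.dist_le_mul x hx y hy
  rw [Real.dist_eq] at d1 d2 ⊢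
  have e : f₁ x * f₂ x - f₁ y * f₂ y = f₁ x * (f₂ x - f₂ y) + f₂ y * (f₁ x - f₁ y) := by ring
  have hB₁ : 0 ≤ B₁ := le_trans (abs_nonneg _) (hb₁ x hx)
  have hB₂ : 0 ≤ B₂ := le_trans (abs_nonneg _) (hb₂ y hy)
  have hcoe : (B₁ * K₂ + B₂ * K₁ : ℝ) ≤ ((B₁ * K₂ + B₂ * K₁).toNNReal : ℝ) :=
    Real.le_coe_toNNReal _
  calc |f₁ x * f₂ x - f₁ y * f₂ y|
      ≤ |f₁ x| * |f₂ x - f₂ y| + |f₂ y| * |f₁ x - f₁ y| := by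
        rw [e]; exact (abs_add_le _ _).trans (by rw [abs_mul, abs_mul])
    _ ≤ B₁ * (K₂ * dist x y) + B₂ * (K₁ * dist x y) := by
        refine add_le_add (mul_le_mul (hb₁ x hx) (by rwa [Real.dist_eq] at d2) (abs_nonneg _) hB₁)
          (mul_le_mul (hb₂ y hy) (by rwa [Real.dist_eq] at d1) (abs_nonneg _) hB₂)
    _ = (B₁ * K₂ + B₂ * K₁) * dist x y := by ring
    _ ≤ ((B₁ * K₂ + B₂ * K₁).toNNReal : ℝ) * dist x y :=
        mul_le_mul_of_nonneg_right hcoe dist_nonneg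

theorem stmt_5
    (m : ℕ) (hm : 2 ≤ m)
    (T : ℝ) (hT : 0 < T)
    (K : ℝ → ℝ) (hKcont : ContinuousOn K (Set.Icc 0 T))
    (φ φ' : ℝ → ℝ)
    (hφderiv : ∀ t ∈ Set.Ioc (0:ℝ) T, HasDerivWithinAt φ (φ' t) (Set.Ioc 0 T) t)
    (hφ'cont : ContinuousOn φ' (Set.Ioc 0 T))
    (hRiccati : ∀ t ∈ Set.Ioc (0:ℝ) T,
      φ' t + φ t ^ 2 / ((m : ℝ) - 1) + K t ≤ 0)
    (hbdd : ∃ C : ℝ, ∀ᶠ t in nhdsWithin 0 (Set.Ioi 0), |t * φ t| ≤ C)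
    (L : NNReal) (h : ℝ → ℝ)
    (hLip : LipschitzOnWith L h (Set.Icc 0 T))
    (hnonneg : ∀ t ∈ Set.Icc (0:ℝ) T, 0 ≤ h t)
    (hzero : h 0 = 0)
    (h' : ℝ → ℝ)
    (hh' : ∀ᵐ t ∂(MeasureTheory.volume.restrict (Set.Ioo 0 T)),
      HasDerivAt h (h' t) t) :
    (h T ^ 2 * φ T ≤ ((m : ℝ) - 1) * (∫ t in (0:ℝ)..T, h' t ^ 2)
        - ∫ t in (0:ℝ)..T, h t ^ 2 * K t) ∧
    (h T = 0 → 0 ≤ ((m : ℝ) - 1) * (∫ t in (0:ℝ)..T, h' t ^ 2)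
        - ∫ t in (0:ℝ)..T, h t ^ 2 * K t) := by
  have hc0 : (0:ℝ) < (m:ℝ) - 1 := by
    have h2 : (2:ℝ) ≤ (m:ℝ) := by exact_mod_cast hm
    linarith
  set c : ℝ := (m:ℝ) - 1 with hcdef
  have hconth : ContinuousOn h (Set.Icc 0 T) := hLip.continuousOn
  have hcontφ : ContinuousOn φ (Set.Ioc 0 T) := fun t ht =>
    (hφderiv t ht).continuousWithinAt
  set Φ : ℝ → ℝ := fun t => c * h' t ^ 2 - h t ^ 2 * K t with hΦdef
  -- integrability of h²K on Icc 0 T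
  have hhK : IntegrableOn (fun t => h t ^ 2 * K t) (Set.Icc 0 T) :=
    ((hconth.pow 2).mul hKcont).integrableOn_compact isCompact_Icc
  -- a.e. bound and measurability of h'
  have hh'bd : ∀ᵐ t ∂(volume.restrict (Set.Ioo 0 T)), |h' t| ≤ (L:ℝ) := by
    filter_upwards [hh', ae_restrict_mem measurableSet_Ioo] with t ht hmem
    exact aux_abs_deriv_le hLip (Icc_mem_nhds hmem.1 hmem.2) ht
  have hh'meas : AEStronglyMeasurable h' (volume.restrict (Set.Ioo 0 T)) := by
    have heq : h' =ᵐ[volume.restrict (Set.Ioo 0 T)] deriv h := by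
      filter_upwards [hh'] with t ht using ht.deriv.symm
    exact (measurable_deriv h).aestronglyMeasurable.congr heq.symm
  have hh'sq : IntegrableOn (fun t => h' t ^ 2) (Set.Ioo 0 T) := by
    refine Integrable.mono' (g := fun _ => (L:ℝ)^2)
      (integrableOn_const measure_Ioo_lt_top.ne) ?_ ?_
    · have := hh'meas.mul hh'meas
      exact hh'meas.pow 2
    · filter_upwards [hh'bd] with t ht
      have : |h' t ^ 2| = |h' t| ^ 2 := by rw [abs_pow]
      rw [Real.norm_eq_abs, this]
      exact pow_le_pow_left₀ (abs_nonneg _) ht 2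
  have hΦint : IntegrableOn Φ (Set.Ioo 0 T) :=
    (hh'sq.const_mul c).sub (hhK.mono_set Set.Ioo_subset_Icc_self)
  have hII1 : IntervalIntegrable (fun t => h' t ^ 2) volume 0 T :=
    (intervalIntegrable_iff_integrableOn_Ioo_of_le hT.le).2 hh'sq
  have hII2 : IntervalIntegrable (fun t => h t ^ 2 * K t) volume 0 T :=
    (intervalIntegrable_iff_integrableOn_Ioo_of_le hT.le).2
      (hhK.mono_set Set.Ioo_subset_Icc_self)
  have hIIΦ : IntervalIntegrable Φ volume 0 T := (hII1.const_mul c).sub hII2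
  -- key inequality for each ε
  have key : ∀ ε ∈ Set.Ioo (0:ℝ) T,
      h T ^ 2 * φ T - h ε ^ 2 * φ ε ≤ ∫ t in ε..T, Φ t := by
    intro ε hε
    have hεT : ε ≤ T := hε.2.le
    have hsub : Set.Icc ε T ⊆ Set.Ioc 0 T := fun t ht => ⟨lt_of_lt_of_le hε.1 ht.1, ht.2⟩
    have hsub0 : Set.Icc ε T ⊆ Set.Icc 0 T := Set.Icc_subset_Icc hε.1.le le_rfl
    obtain ⟨Bφ, hBφ⟩ := isCompact_Icc.exists_bound_of_continuousOn (hcontφ.mono hsub)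
    obtain ⟨Bφ', hBφ'⟩ := isCompact_Icc.exists_bound_of_continuousOn (hφ'cont.mono hsub)
    obtain ⟨Bh, hBh⟩ := isCompact_Icc.exists_bound_of_continuousOn (hconth.mono hsub0)
    have hφlip : LipschitzOnWith (Real.toNNReal Bφ') φ (Set.Icc ε T) := by
      apply (convex_Icc ε T).lipschitzOnWith_of_nnnorm_hasDerivWithin_le
        (f' := φ') (fun t ht => (hφderiv t (hsub ht)).mono hsub)
      intro t ht
      rw [← NNReal.coe_le_coe, coe_nnnorm, Real.norm_eq_abs, Real.coe_toNNReal']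
      exact le_max_of_le_left (by simpa [Real.norm_eq_abs] using hBφ' t ht)
    have hhlip : LipschitzOnWith L h (Set.Icc ε T) := hLip.mono hsub0
    have hBh' : ∀ t ∈ Set.Icc ε T, |h t| ≤ Bh := fun t ht => by
      simpa [Real.norm_eq_abs] using hBh t ht
    have hBφabs : ∀ t ∈ Set.Icc ε T, |φ t| ≤ Bφ := fun t ht => by
      simpa [Real.norm_eq_abs] using hBφ t ht
    obtain ⟨M1, hM1⟩ := aux_lip_mul hhlip hhlip hBh' hBh'
    have hBhh : ∀ t ∈ Set.Icc ε T, |h t * h t| ≤ Bh * Bh := fun t ht => by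
      rw [abs_mul]
      exact mul_le_mul (hBh' t ht) (hBh' t ht) (abs_nonneg _)
        ((abs_nonneg _).trans (hBh' t ht))
    obtain ⟨M2, hM2⟩ := aux_lip_mul hM1 hφlip hBhh hBφabs
    obtain ⟨G, hGlip, hGeq⟩ := hM2.extend_real
    have hIooεT : Set.Ioo ε T ⊆ Set.Ioo 0 T := Set.Ioo_subset_Ioo hε.1.le le_rfl
    set g' : ℝ → ℝ := fun t => (h' t * h t + h t * h' t) * φ t + h t * h t * φ' t with hg'def
    have hderivG : ∀ᵐ t ∂(volume.restrict (Set.Ioo ε T)), HasDerivAt G (g' t) t := by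
      filter_upwards [ae_restrict_of_ae_restrict_of_subset hIooεT hh',
        ae_restrict_mem measurableSet_Ioo] with t ht hmem
      have h0T : t ∈ Set.Ioo (0:ℝ) T := hIooεT hmem
      have hφt : HasDerivAt φ (φ' t) t :=
        (hφderiv t ⟨h0T.1, h0T.2.le⟩).hasDerivAt (Ioc_mem_nhds h0T.1 h0T.2)
      have hgt : HasDerivAt (fun s => h s * h s * φ s) (g' t) t := (ht.mul ht).mul hφt
      have hev : G =ᶠ[nhds t] (fun s => h s * h s * φ s) :=
        Filter.eventuallyEq_of_mem (Ioo_mem_nhds hmem.1 hmem.2)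
          (fun x hx => (hGeq (Set.Ioo_subset_Icc_self hx)).symm)
      exact hgt.congr_of_eventuallyEq hev
    have hbound : ∀ᵐ t ∂(volume.restrict (Set.Ioo ε T)), g' t ≤ Φ t := by
      filter_upwards [ae_restrict_mem measurableSet_Ioo] with t hmem
      have h0T : t ∈ Set.Ioo (0:ℝ) T := hIooεT hmem
      have hR := hRiccati t ⟨h0T.1, h0T.2.le⟩
      have hh0 : 0 ≤ h t := hnonneg t ⟨h0T.1.le, h0T.2.le⟩
      have hRic : φ' t ≤ -(φ t ^ 2 / c) - K t := by linarith
      have h1 : h t ^ 2 * φ' t ≤ h t ^ 2 * (-(φ t ^ 2 / c) - K t) :=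
        mul_le_mul_of_nonneg_left hRic (sq_nonneg _)
      have e1 : h t ^ 2 * (-(φ t ^ 2 / c) - K t)
          = -(h t ^ 2 * φ t ^ 2 / c) - h t ^ 2 * K t := by ring
      rw [e1] at h1
      have h2 : 2 * h t * h' t * φ t ≤ c * h' t ^ 2 + h t ^ 2 * φ t ^ 2 / c := by
        rw [← sub_nonneg]
        have e2 : c * h' t ^ 2 + h t ^ 2 * φ t ^ 2 / c - 2 * h t * h' t * φ t
            = (c * h' t - h t * φ t) ^ 2 / c := by
          field_simp
          ring
        rw [e2]
        positivity
      have e3 : g' t = 2 * h t * h' t * φ t + h t ^ 2 * φ' t := by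
        simp only [hg'def]; ring
      rw [e3, hΦdef]
      dsimp only
      nlinarith [h1, h2]
    have hΦint' : IntegrableOn Φ (Set.Ioo ε T) := hΦint.mono_set hIooεT
    have hmain := aux_lip_ftc hGlip hεT hderivG hΦint' hbound
    have hGT : G T = h T * h T * φ T := (hGeq ⟨hεT, le_rfl⟩).symm
    have hGε : G ε = h ε * h ε * φ ε := (hGeq ⟨le_rfl, hεT⟩).symm
    rw [hGT, hGε] at hmain
    have hint : ∫ t in ε..T, Φ t = ∫ t in Set.Ioo ε T, Φ t := by
      rw [intervalIntegral.integral_of_le hεT, integral_Ioc_eq_integral_Ioo]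
    rw [hint]
    calc h T ^ 2 * φ T - h ε ^ 2 * φ ε
        = h T * h T * φ T - h ε * h ε * φ ε := by ring
      _ ≤ ∫ t in Set.Ioo ε T, Φ t := hmain
  -- limits
  have hΦIcc : IntegrableOn Φ (Set.Icc 0 T) := by
    rw [integrableOn_Icc_iff_integrableOn_Ioo]
    exact hΦint
  have hFcont : ContinuousOn (fun x => ∫ t in x..T, Φ t) (Set.uIcc 0 T) := by
    apply intervalIntegral.continuousOn_primitive_interval_left
    rwa [Set.uIcc_of_le hT.le]
  have hIoomem : Set.Ioo (0:ℝ) T ∈ nhdsWithin 0 (Set.Ioi 0) :=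
    Ioo_mem_nhdsGT_of_mem ⟨le_rfl, hT⟩
  have hle1 : nhdsWithin (0:ℝ) (Set.Ioi 0) ≤ nhdsWithin 0 (Set.uIcc 0 T) := by
    refine le_trans (nhdsWithin_le_of_mem hIoomem) (nhdsWithin_mono _ ?_)
    rw [Set.uIcc_of_le hT.le]
    exact Set.Ioo_subset_Icc_self
  have hFt : Tendsto (fun ε => ∫ t in ε..T, Φ t) (nhdsWithin 0 (Set.Ioi 0))
      (nhds (∫ t in (0:ℝ)..T, Φ t)) :=
    ((hFcont 0 Set.left_mem_uIcc).mono_left hle1)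
  obtain ⟨C, hC⟩ := hbdd
  have hgε : Tendsto (fun ε => h ε ^ 2 * φ ε) (nhdsWithin 0 (Set.Ioi 0)) (nhds 0) := by
    apply squeeze_zero_norm' (a := fun ε => (L:ℝ)^2 * C * ε)
    · filter_upwards [hC, hIoomem] with ε h1 h2
      have hhε : |h ε| ≤ (L:ℝ) * ε := by
        have hd := hLip.dist_le_mul ε ⟨h2.1.le, h2.2.le⟩ 0 ⟨le_rfl, hT.le⟩
        rw [Real.dist_eq, Real.dist_eq, hzero, sub_zero, sub_zero, abs_of_pos h2.1] at hd
        exact hd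
      have e1 : ‖h ε ^ 2 * φ ε‖ = |h ε| ^ 2 * |φ ε| := by
        rw [Real.norm_eq_abs, abs_mul, abs_pow, sq_abs, ← sq_abs]
      have hbound2 : |h ε| ^ 2 ≤ ((L:ℝ) * ε) ^ 2 := pow_le_pow_left₀ (abs_nonneg _) hhε 2
      have hεφ : ε * |φ ε| ≤ C := by
        rw [show ε * |φ ε| = |ε * φ ε| from by rw [abs_mul, abs_of_pos h2.1]]
        exact h1
      have hφnn : 0 ≤ |φ ε| := abs_nonneg _
      rw [e1]
      calc |h ε| ^ 2 * |φ ε| ≤ ((L:ℝ) * ε) ^ 2 * |φ ε| :=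
            mul_le_mul_of_nonneg_right hbound2 hφnn
        _ = (L:ℝ) ^ 2 * ε * (ε * |φ ε|) := by ring
        _ ≤ (L:ℝ) ^ 2 * ε * C :=
            mul_le_mul_of_nonneg_left hεφ (mul_nonneg (by positivity) h2.1.le)
        _ = (L:ℝ) ^ 2 * C * ε := by ring
    · have : Tendsto (fun ε : ℝ => (L:ℝ)^2 * C * ε) (nhds 0) (nhds ((L:ℝ)^2 * C * 0)) :=
        (continuous_const.mul continuous_id).tendsto 0
      rw [mul_zero] at this
      exact this.mono_left nhdsWithin_le_nhds
  have hlim : Tendsto (fun ε => h ε ^ 2 * φ ε + ∫ t in ε..T, Φ t)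
      (nhdsWithin 0 (Set.Ioi 0)) (nhds (0 + ∫ t in (0:ℝ)..T, Φ t)) := hgε.add hFt
  have hineq : h T ^ 2 * φ T ≤ 0 + ∫ t in (0:ℝ)..T, Φ t := by
    refine ge_of_tendsto hlim ?_
    filter_upwards [hIoomem] with ε hε
    linarith [key ε hε]
  have hsplit : ∫ t in (0:ℝ)..T, Φ t
      = c * (∫ t in (0:ℝ)..T, h' t ^ 2) - ∫ t in (0:ℝ)..T, h t ^ 2 * K t := by
    rw [hΦdef]
    rw [intervalIntegral.integral_sub (hII1.const_mul c) hII2,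
      intervalIntegral.integral_const_mul]
  rw [hsplit] at hineq
  constructor
  · linarith
  · intro hT0
    have : h T ^ 2 * φ T = 0 := by rw [hT0]; ring
    linarith
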